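/- Let S ⊂ ℝ^n be a compact set and U_0 ⊆ ℝ^{n×n} a set of matrices. Define S₀^∞ = {x ∈ ℝ^n : A^t x ∈ S for all A ∈ U_0 and all integers t ≥ 0} (where A^0 x = x). If S₀^∞ has nonempty interior in ℝ^n, then every matrix A ∈ U_0 has spectral radius at most one, i.e., every complex eigenvalue λ of A satisfies |λ| ≤ 1. -/

import Mathlib

open Matrix

/-- If the infinite-step safe set
`S₀^∞ = {x : Aᵗ x ∈ S for all A ∈ U₀ and all t ≥ 0}` has nonempty interior and `S`
is compact, then every matrix in `U₀` has spectral radius at most one. -/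
theorem stmt_7 (n : ℕ) (S : Set (Fin n → ℝ)) (hS : IsCompact S)
    (U0 : Set (Matrix (Fin n) (Fin n) ℝ))
    (hint : (interior {x : Fin n → ℝ | ∀ A ∈ U0, ∀ t : ℕ, (A ^ t) *ᵥ x ∈ S}).Nonempty) :
    ∀ A ∈ U0, ∀ μ ∈ spectrum ℂ (A.map Complex.ofReal), ‖μ‖ ≤ 1 := by
  intro A hA μ hμ
  by_contra hμ1
  push_neg at hμ1
  -- an interior point and a ball around it
  obtain ⟨x₀, hx₀⟩ := hint
  obtain ⟨ε, hε, hball⟩ := Metric.isOpen_iff.mp isOpen_interior x₀ hx₀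
  have hsafe : ∀ y, dist y x₀ < ε → ∀ t : ℕ, (A ^ t) *ᵥ y ∈ S := by
    intro y hy t
    exact interior_subset (hball hy) A hA t
  -- a norm bound on S
  obtain ⟨M, hM⟩ := hS.isBounded.exists_norm_le
  have hM0 : 0 ≤ M := le_trans (norm_nonneg _) (hM _ (hsafe x₀ (by simpa using hε) 0))
  -- entrywise bound on powers of A
  set C : ℝ := 4 * M / ε with hC
  have hC0 : 0 ≤ C := by positivity
  have hentry : ∀ t : ℕ, ∀ i j, |(A ^ t) i j| ≤ C := by
    intro t i j
    have h1 : (A ^ t) *ᵥ (x₀ + Pi.single j (ε / 2)) ∈ S := by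
      apply hsafe
      simp only [dist_eq_norm, add_sub_cancel_left]
      rw [Pi.norm_single, Real.norm_eq_abs, abs_of_pos (by linarith)]
      linarith
    have h2 : (A ^ t) *ᵥ x₀ ∈ S := hsafe x₀ (by simpa using hε) t
    have hdiff : (A ^ t) *ᵥ (x₀ + Pi.single j (ε / 2)) - (A ^ t) *ᵥ x₀
        = (A ^ t) *ᵥ (Pi.single j (ε / 2)) := by
      rw [mulVec_add]; ring_nf
    have hnd : ‖(A ^ t) *ᵥ (Pi.single j (ε / 2))‖ ≤ 2 * M := by
      rw [← hdiff]
      calc ‖_ - _‖ ≤ ‖(A ^ t) *ᵥ (x₀ + Pi.single j (ε / 2))‖ + ‖(A ^ t) *ᵥ x₀‖ :=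
            norm_sub_le _ _
        _ ≤ M + M := add_le_add (hM _ h1) (hM _ h2)
        _ = 2 * M := by ring
    have hcomp : ((A ^ t) *ᵥ (Pi.single j (ε / 2))) i = (A ^ t) i j * (ε / 2) := by
      rw [mulVec_single]; rfl
    have : |(A ^ t) i j * (ε / 2)| ≤ 2 * M := by
      rw [← Real.norm_eq_abs, ← hcomp]
      exact le_trans (norm_le_pi_norm _ i) hnd
    rw [abs_mul, abs_of_pos (by linarith : (0:ℝ) < ε / 2)] at this
    rw [hC, le_div_iff₀ hε]
    nlinarith [abs_nonneg ((A ^ t) i j)]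
  -- pass to the complex matrix
  set Mc : Matrix (Fin n) (Fin n) ℂ := A.map Complex.ofReal with hMc
  have hpow : ∀ t : ℕ, Mc ^ t = (A ^ t).map Complex.ofReal := by
    intro t
    exact (map_pow (Complex.ofRealHom.mapMatrix) A t).symm
  -- eigenvector for μ
  have hspec : μ ∈ spectrum ℂ (Matrix.toLinAlgEquiv' Mc) := by
    rwa [AlgEquiv.spectrum_eq]
  have hev : Module.End.HasEigenvalue (Matrix.toLin' Mc) μ := by
    rw [Module.End.hasEigenvalue_iff_mem_spectrum]
    exact hspec
  obtain ⟨v, hv⟩ := hev.exists_hasEigenvector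
  have hv0 : v ≠ 0 := hv.right
  have hvnorm : 0 < ‖v‖ := norm_pos_iff.mpr hv0
  have heig : Mc *ᵥ v = μ • v := by
    have := hv.apply_eq_smul
    rwa [Matrix.toLin'_apply] at this
  have hiter : ∀ t : ℕ, (Mc ^ t) *ᵥ v = μ ^ t • v := by
    intro t
    induction t with
    | zero => simp
    | succ t ih =>
      rw [pow_succ, ← mulVec_mulVec, heig, mulVec_smul, ih, smul_smul, pow_succ, mul_comm]
  -- norm bound on (Mc ^ t) *ᵥ v
  have hbound : ∀ t : ℕ, ‖(Mc ^ t) *ᵥ v‖ ≤ n * C * ‖v‖ := by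
    intro t
    apply pi_norm_le_iff_of_nonneg (by positivity) |>.mpr
    intro i
    rw [hpow]
    calc ‖∑ j, ((A ^ t).map Complex.ofReal) i j * v j‖
        ≤ ∑ j, ‖((A ^ t).map Complex.ofReal) i j * v j‖ := norm_sum_le _ _
      _ ≤ ∑ _j : Fin n, C * ‖v‖ := by
          apply Finset.sum_le_sum
          intro j _
          rw [norm_mul]
          apply mul_le_mul _ (norm_le_pi_norm v j) (norm_nonneg _) hC0
          simpa [Matrix.map_apply, Complex.norm_real, Real.norm_eq_abs] using hentry t i j
      _ = n * C * ‖v‖ := by simp [Finset.sum_const]; ring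
  -- contradiction via unboundedness of ‖μ‖ ^ t
  obtain ⟨t, ht⟩ := pow_unbounded_of_one_lt (n * C) hμ1
  have h1 : ‖(Mc ^ t) *ᵥ v‖ = ‖μ‖ ^ t * ‖v‖ := by
    rw [hiter, norm_smul, norm_pow]
  have h2 := hbound t
  rw [h1] at h2
  have : ‖μ‖ ^ t * ‖v‖ ≤ n * C * ‖v‖ := h2
  nlinarith
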